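/- The system ẋ₁ = g(x₂), ẋ₂ = u on [0,T], with g(y) = 0 for y ≤ 2 and g(y) = (y−2)² sin(y−2) for y > 2, is not globally feedback equivalent to the double integrator ż₁ = z₂, ż₂ = v. More precisely, there do not exist C¹ functions φ₁(t,x₁,x₂), φ₂(t,x₁,x₂), φ₃(t,x₁,x₂,u) such that for each t the maps (x₁,x₂) ↦ (φ₁,φ₂) and (x₁,x₂,u) ↦ (φ₁,φ₂,φ₃) are diffeomorphisms of ℝ² onto ℝ² and of ℝ³ onto ℝ³, and such that the transformation z_i(t) = φ_i(t,x₁(t),x₂(t)), v(t) = φ₃(t,x₁(t),x₂(t),u(t)) carries trajectories of the first system to trajectories of the double integrator and conversely. -/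

import Mathlib

/-- The singular nonlinearity of Example 1.1. -/
noncomputable def exG (y : ℝ) : ℝ :=
  if y ≤ 2 then 0 else (y - 2) ^ 2 * Real.sin (y - 2)

/-- A trajectory of the triangular system ẋ₁ = g(x₂), ẋ₂ = u on [0,T]. -/
def IsTrajSys (T : ℝ) (x₁ x₂ u : ℝ → ℝ) : Prop :=
  ∀ t ∈ Set.Icc (0 : ℝ) T,
    HasDerivAt x₁ (exG (x₂ t)) t ∧ HasDerivAt x₂ (u t) t

/-- A trajectory of the double integrator ż₁ = z₂, ż₂ = v on [0,T]. -/
def IsTrajCan (T : ℝ) (z₁ z₂ v : ℝ → ℝ) : Prop :=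
  ∀ t ∈ Set.Icc (0 : ℝ) T,
    HasDerivAt z₁ (z₂ t) t ∧ HasDerivAt z₂ (v t) t


lemma exG_eq_zero' {y : ℝ} (hy : y ≤ 2) : exG y = 0 := if_pos hy

lemma trajSys_line (T a b c : ℝ) (h : ∀ s ∈ Set.Icc (0:ℝ) T, b + c * s ≤ 2) :
    IsTrajSys T (fun _ => a) (fun s => b + c * s) (fun _ => c) := by
  intro s hs
  refine ⟨?_, ?_⟩
  · simpa [exG_eq_zero' (h s hs)] using hasDerivAt_const s a
  · exact (((hasDerivAt_id s).const_mul c).const_add b).congr_deriv (mul_one c)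

/-- Example 1.1: the system ẋ₁ = g(x₂), ẋ₂ = u on [0,T] is not globally feedback
equivalent to the double integrator: there are no C¹ functions φ₁, φ₂, φ₃ such
that for each t the state transformation and the state-control transformation
are global diffeomorphisms (of ℝ² and ℝ³ respectively) carrying trajectories of
the system to trajectories of the double integrator and conversely. -/
theorem stmt_11 (T : ℝ) (hT : 0 < T) :
    ¬ ∃ (φ₁ φ₂ : ℝ → ℝ × ℝ → ℝ) (φ₃ : ℝ → ℝ × ℝ × ℝ → ℝ),
      -- C¹ regularity of the transformations
      ContDiff ℝ 1 (fun p : ℝ × (ℝ × ℝ) => φ₁ p.1 p.2) ∧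
      ContDiff ℝ 1 (fun p : ℝ × (ℝ × ℝ) => φ₂ p.1 p.2) ∧
      ContDiff ℝ 1 (fun p : ℝ × (ℝ × ℝ × ℝ) => φ₃ p.1 p.2) ∧
      -- (A) for each t the maps are diffeomorphisms of ℝ² onto ℝ² and ℝ³ onto ℝ³
      (∀ t ∈ Set.Icc (0 : ℝ) T,
        Function.Bijective (fun x : ℝ × ℝ => (φ₁ t x, φ₂ t x)) ∧
        ContDiff ℝ 1 (Function.invFun (fun x : ℝ × ℝ => (φ₁ t x, φ₂ t x)))) ∧
      (∀ t ∈ Set.Icc (0 : ℝ) T,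
        Function.Bijective
          (fun p : ℝ × ℝ × ℝ => (φ₁ t (p.1, p.2.1), φ₂ t (p.1, p.2.1), φ₃ t p)) ∧
        ContDiff ℝ 1 (Function.invFun
          (fun p : ℝ × ℝ × ℝ => (φ₁ t (p.1, p.2.1), φ₂ t (p.1, p.2.1), φ₃ t p)))) ∧
      -- (B) trajectories are carried to trajectories, in both directions
      (∀ x₁ x₂ u : ℝ → ℝ, IsTrajSys T x₁ x₂ u →
        IsTrajCan T (fun t => φ₁ t (x₁ t, x₂ t)) (fun t => φ₂ t (x₁ t, x₂ t))
          (fun t => φ₃ t (x₁ t, x₂ t, u t))) ∧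
      (∀ z₁ z₂ v x₁ x₂ u : ℝ → ℝ, IsTrajCan T z₁ z₂ v →
        (∀ t ∈ Set.Icc (0 : ℝ) T,
          z₁ t = φ₁ t (x₁ t, x₂ t) ∧ z₂ t = φ₂ t (x₁ t, x₂ t) ∧
          v t = φ₃ t (x₁ t, x₂ t, u t)) →
        IsTrajSys T x₁ x₂ u) := by
  rintro ⟨φ₁, φ₂, φ₃, h1, -, -, hA, -, hB, -⟩
  set f : ℝ × (ℝ × ℝ) → ℝ := fun p => φ₁ p.1 p.2 with hf
  have key : ∀ t ∈ Set.Icc (0:ℝ) T, ∀ a y c : ℝ,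
      (∀ s ∈ Set.Icc (0:ℝ) T, (y - c * t) + c * s ≤ 2) →
      fderiv ℝ f (t, (a, y)) (1, (0, c)) = φ₂ t (a, y) := by
    intro t ht a y c hline
    have htraj := trajSys_line T a (y - c * t) c hline
    have hcan := (hB _ _ _ htraj t ht).1
    have hγ : HasDerivAt (fun s : ℝ => ((s, (a, (y - c * t) + c * s)) : ℝ × (ℝ × ℝ)))
        ((1 : ℝ), ((0 : ℝ), c)) t := by
      apply HasDerivAt.prodMk (hasDerivAt_id t)
      apply HasDerivAt.prodMk (hasDerivAt_const t a)
      exact (((hasDerivAt_id t).const_mul c).const_add (y - c*t)).congr_deriv (mul_one c)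
    have hdf : HasFDerivAt f (fderiv ℝ f (t, (a, (y - c*t) + c*t))) (t, (a, (y - c*t) + c*t)) :=
      (h1.differentiable one_ne_zero _).hasFDerivAt
    have hcomp := hdf.comp_hasDerivAt t hγ
    have heq : (y - c*t) + c*t = y := by ring
    rw [heq] at hcomp
    have hthis : HasDerivAt (fun s => φ₁ s (a, (y - c*t) + c*s))
        (fderiv ℝ f (t, (a, y)) (1, (0, c))) t := hcomp
    have h2 := hthis.unique hcan
    simpa [heq] using h2
  have hyd : ∀ t ∈ Set.Icc (0:ℝ) T, ∀ a : ℝ, ∀ y ∈ Set.Icc (0:ℝ) 1,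
      fderiv ℝ f (t, (a, y)) ((0:ℝ), ((0:ℝ), (1:ℝ))) = 0 := by
    intro t ht a y hy
    set c : ℝ := (2 - y) / T with hc
    have hcpos : 0 < c := div_pos (by linarith [hy.2]) hT
    have hline : ∀ s ∈ Set.Icc (0:ℝ) T, (y - c * t) + c * s ≤ 2 := by
      intro s hs
      have hst : c * s - c * t ≤ c * T := by
        nlinarith [hs.2, ht.1, hcpos.le, hs.1, ht.2]
      have hcT : c * T = 2 - y := by rw [hc]; exact div_mul_cancel₀ _ hT.ne'
      linarith
    have h₁ := key t ht a y c hline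
    have h₀ := key t ht a y 0 (by intro s hs; simpa using hy.2.trans one_le_two)
    have hsplit : ((1:ℝ), ((0:ℝ), c)) = ((1:ℝ), ((0:ℝ), (0:ℝ))) + c • ((0:ℝ), ((0:ℝ), (1:ℝ))) := by
      simp [Prod.ext_iff]
    rw [hsplit, map_add, map_smul, h₀] at h₁
    have hz : c • fderiv ℝ f (t, (a, y)) ((0:ℝ), ((0:ℝ), (1:ℝ))) = 0 := by
      linarith [h₁, h₀]
    rcases smul_eq_zero.mp hz with h | h
    · exact absurd h hcpos.ne'
    · exact h
  have hφ1 : ∀ t ∈ Set.Icc (0:ℝ) T, ∀ a : ℝ, φ₁ t (a, 1) = φ₁ t (a, 0) := by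
    intro t ht a
    have hder : ∀ y ∈ Set.Icc (0:ℝ) 1,
        HasDerivWithinAt (fun y => φ₁ t (a, y)) 0 (Set.Icc 0 1) y := by
      intro y hy
      have hγ : HasDerivAt (fun y : ℝ => ((t, (a, y)) : ℝ × (ℝ × ℝ)))
          ((0 : ℝ), ((0 : ℝ), (1:ℝ))) y := by
        apply HasDerivAt.prodMk (hasDerivAt_const y t)
        exact HasDerivAt.prodMk (hasDerivAt_const y a) (hasDerivAt_id y)
      have hdf : HasFDerivAt f (fderiv ℝ f (t, (a, y))) (t, (a, y)) :=
        (h1.differentiable one_ne_zero _).hasFDerivAt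
      have hcomp := hdf.comp_hasDerivAt y hγ
      rw [hyd t ht a y hy] at hcomp
      exact hcomp.hasDerivWithinAt
    have hmv := Convex.norm_image_sub_le_of_norm_hasDerivWithin_le (C := 0) (f' := fun _ => 0)
      hder (by intro x hx; simp) (convex_Icc 0 1)
      (Set.left_mem_Icc.mpr zero_le_one) (Set.right_mem_Icc.mpr zero_le_one)
    simp at hmv
    exact sub_eq_zero.mp (by simpa [Real.norm_eq_abs, abs_eq_zero] using hmv)
  have h0T : (0:ℝ) ∈ Set.Icc (0:ℝ) T := ⟨le_rfl, hT.le⟩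
  have hφ2 : φ₂ 0 ((0:ℝ), 1) = φ₂ 0 ((0:ℝ), 0) := by
    have htraj0 : IsTrajSys T (fun _ => (0:ℝ)) (fun _ => (0:ℝ)) (fun _ => (0:ℝ)) := by
      have := trajSys_line T 0 0 0 (by intro s hs; norm_num)
      simpa using this
    have htraj1 : IsTrajSys T (fun _ => (0:ℝ)) (fun _ => (1:ℝ)) (fun _ => (0:ℝ)) := by
      have := trajSys_line T 0 1 0 (by intro s hs; norm_num)
      simpa using this
    have hd0 := (hB _ _ _ htraj0 0 h0T).1
    have hd1 := (hB _ _ _ htraj1 0 h0T).1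
    have hg : HasDerivAt (fun s => φ₁ s ((0:ℝ), 1) - φ₁ s ((0:ℝ), 0))
        (φ₂ 0 ((0:ℝ), 1) - φ₂ 0 ((0:ℝ), 0)) 0 := hd1.sub hd0
    have hzero : ∀ s ∈ Set.Icc (0:ℝ) T, (fun s => φ₁ s ((0:ℝ), 1) - φ₁ s ((0:ℝ), 0)) s = 0 := by
      intro s hs; simp [hφ1 s hs 0]
    have hw1 : HasDerivWithinAt (fun s => φ₁ s ((0:ℝ), 1) - φ₁ s ((0:ℝ), 0))
        (φ₂ 0 ((0:ℝ), 1) - φ₂ 0 ((0:ℝ), 0)) (Set.Icc 0 T) 0 := hg.hasDerivWithinAt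
    have hw2 : HasDerivWithinAt (fun s => φ₁ s ((0:ℝ), 1) - φ₁ s ((0:ℝ), 0))
        0 (Set.Icc 0 T) 0 :=
      (hasDerivWithinAt_const 0 (Set.Icc 0 T) (0:ℝ)).congr hzero (hzero 0 h0T)
    have hu := uniqueDiffOn_Icc hT 0 h0T
    have e1 := hw1.derivWithin hu
    have e2 := hw2.derivWithin hu
    have he : φ₂ 0 ((0:ℝ), 1) - φ₂ 0 ((0:ℝ), 0) = 0 := by rw [← e1, e2]
    linarith
  have hinj := (hA 0 h0T).1.1
  have hcontra : ((0:ℝ), (0:ℝ)) = ((0:ℝ), (1:ℝ)) := by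
    apply hinj
    simp [hφ1 0 h0T 0, hφ2]
  simp [Prod.ext_iff] at hcontra
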